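/- Let f = (f_1, ..., f_n) : ℂ^n → ℂ^n be a polynomial map where each f_i is homogeneous (of possibly different positive degrees). If the only solution of f(x) = 0 is x = 0, then for every ω ∈ ℂ^n the equation f(x) = ω has a solution. -/

import Mathlib

open MvPolynomial

section FriedlandAux

/-- Homogeneous component of a product `c * g` where `g` is homogeneous. -/
lemma Friedland.hcomp_mul {σ : Type*} {g : MvPolynomial σ ℂ} {e : ℕ} (hg : g.IsHomogeneous e)
    (c : MvPolynomial σ ℂ) {k : ℕ} (hek : e ≤ k) :
    homogeneousComponent k (c * g) = homogeneousComponent (k - e) c * g := by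
  classical
  conv_lhs => rw [← sum_homogeneousComponent c, Finset.sum_mul, map_sum]
  have key : ∀ i, homogeneousComponent k (homogeneousComponent i c * g)
      = if i = k - e then homogeneousComponent i c * g else 0 := by
    intro i
    have hh : (homogeneousComponent i c * g).IsHomogeneous (i + e) :=
      (homogeneousComponent_isHomogeneous i c).mul hg
    rw [homogeneousComponent_of_mem hh]
    congr 1
    simp only [eq_iff_iff]
    omega
  simp_rw [key]
  rw [Finset.sum_ite_eq' (Finset.range (c.totalDegree + 1)) (k - e)
    (fun i => homogeneousComponent i c * g)]
  split_ifs with h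
  · rfl
  · rw [Finset.mem_range, not_lt] at h
    rw [homogeneousComponent_eq_zero _ _ (by omega), zero_mul]

/-- Evaluation of a homogeneous polynomial at a scaled point. -/
lemma Friedland.eval_smul_homog {σ : Type*} [Fintype σ] {p : MvPolynomial σ ℂ} {e : ℕ}
    (hp : p.IsHomogeneous e) (c : ℂ) (x : σ → ℂ) :
    eval (c • x) p = c ^ e * eval x p := by
  classical
  conv_lhs => rw [p.as_sum]
  conv_rhs => rw [p.as_sum]
  rw [map_sum, map_sum, Finset.mul_sum]
  refine Finset.sum_congr rfl fun u hu => ?_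
  rw [eval_monomial, eval_monomial]
  have hdeg : u.degree = e := by
    by_contra h
    exact (mem_support_iff.mp hu) (hp.coeff_eq_zero h)
  rw [← hdeg]
  simp only [Pi.smul_apply, smul_eq_mul]
  rw [Finsupp.prod, Finsupp.prod]
  simp_rw [mul_pow]
  rw [Finset.prod_mul_distrib, Finset.prod_pow_eq_pow_sum]
  rw [Finsupp.degree_apply]
  ring

/-- A membership of `X j ^ N` in the span of homogeneous polynomials can be realized with
homogeneous coefficients. -/
lemma Friedland.homog_rep {m r : ℕ} (d : Fin r → ℕ) (g : Fin r → MvPolynomial (Fin m) ℂ)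
    (hg : ∀ i, (g i).IsHomogeneous (d i)) (N : ℕ) (hNd : ∀ i, d i ≤ N) (j : Fin m)
    (hXN : (X j : MvPolynomial (Fin m) ℂ) ^ N ∈ Ideal.span (Set.range g)) :
    ∃ b : Fin r → MvPolynomial (Fin m) ℂ,
      (∀ i, (b i).IsHomogeneous (N - d i)) ∧ ∑ i, b i * g i = X j ^ N := by
  rw [Ideal.span, Submodule.mem_span_range_iff_exists_fun] at hXN
  obtain ⟨c, hc⟩ := hXN
  refine ⟨fun i => homogeneousComponent (N - d i) (c i), fun i =>
    homogeneousComponent_isHomogeneous _ _, ?_⟩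
  have := congrArg (homogeneousComponent N) hc
  rw [map_sum] at this
  simp_rw [smul_eq_mul] at this ⊢
  rw [homogeneousComponent_of_mem (isHomogeneous_X_pow j N), if_pos rfl] at this
  rw [← this]
  exact Finset.sum_congr rfl fun i _ => (Friedland.hcomp_mul (hg i) (c i) (hNd i)).symm

lemma Friedland.Finsupp.degree_add' {σ : Type*} (a b : σ →₀ ℕ) :
    (a + b).degree = a.degree + b.degree := by
  simp [Finsupp.degree_eq_weight_one]

lemma Friedland.Finsupp.degree_single' {σ : Type*} (j : σ) (N : ℕ) :
    (Finsupp.single j N).degree = N := by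
  simp [Finsupp.degree_eq_weight_one, Finsupp.weight_apply, Finsupp.sum_single_index]

lemma Friedland.Finsupp.degree_eq_sum_univ {m : ℕ} (u : Fin m →₀ ℕ) : u.degree = ∑ j, u j := by
  rw [Finsupp.degree]
  exact Finset.sum_subset (Finset.subset_univ _)
    (fun x _ hx => Finsupp.notMem_support_iff.mp hx)

/-- Spanning set of products `g^α * monomial v` with `deg v < m*N` and total degree `e`. -/
def Friedland.SS {m r : ℕ} (g : Fin r → MvPolynomial (Fin m) ℂ) (d : Fin r → ℕ) (N e : ℕ) :
    Set (MvPolynomial (Fin m) ℂ) :=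
  {q | ∃ (α : Fin r → ℕ) (v : Fin m →₀ ℕ), v.degree < m * N ∧
    (∑ i, α i * d i) + v.degree = e ∧ q = (∏ i, g i ^ α i) * monomial v 1}

/-- Every homogeneous polynomial of degree `e` is a `ℂ`-linear combination of terms
`g^α * monomial v` with `deg v < m*N` and matching weighted degree. -/
lemma Friedland.graded_span {m r : ℕ} (hm : 0 < m) (d : Fin r → ℕ) (hd : ∀ i, 0 < d i)
    (g : Fin r → MvPolynomial (Fin m) ℂ) (N : ℕ) (hN : 0 < N) (hNd : ∀ i, d i ≤ N)
    (B : Fin m → Fin r → MvPolynomial (Fin m) ℂ)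
    (hB : ∀ j i, (B j i).IsHomogeneous (N - d i))
    (hBX : ∀ j, ∑ i, B j i * g i = X j ^ N) :
    ∀ e (p : MvPolynomial (Fin m) ℂ), p.IsHomogeneous e →
      p ∈ Submodule.span ℂ (Friedland.SS g d N e) := by
  intro e
  induction e using Nat.strong_induction_on with
  | _ e IH =>
  intro p hp
  rw [p.as_sum]
  apply Submodule.sum_mem
  intro u hu
  have hdeg : u.degree = e := by
    by_contra h
    exact (mem_support_iff.mp hu) (hp.coeff_eq_zero h)
  have hsm : (monomial u (coeff u p) : MvPolynomial (Fin m) ℂ) = coeff u p • monomial u 1 := by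
    rw [smul_monomial, smul_eq_mul, mul_one]
  rw [hsm]
  apply Submodule.smul_mem
  by_cases hcase : u.degree < m * N
  · exact Submodule.subset_span ⟨0, u, hcase, by simp [hdeg], by simp⟩
  · push_neg at hcase
    have hsum : u.degree = ∑ j, u j := Friedland.Finsupp.degree_eq_sum_univ u
    have hj : ∃ j, N ≤ u j := by
      by_contra hno
      push_neg at hno
      have h1 : ∑ j, u j ≤ ∑ _j : Fin m, (N - 1) :=
        Finset.sum_le_sum fun j _ => by have := hno j; omega
      rw [Finset.sum_const, Finset.card_univ, Fintype.card_fin, smul_eq_mul] at h1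
      have h2 : m * N ≤ m * (N - 1) := by omega
      have := Nat.le_of_mul_le_mul_left h2 hm
      omega
    obtain ⟨j, hjN⟩ := hj
    set u' := u - Finsupp.single j N with hu'def
    have hu' : u' + Finsupp.single j N = u :=
      tsub_add_cancel_of_le (by rwa [Finsupp.single_le_iff])
    have hdeg' : u'.degree + N = e := by
      rw [← hdeg, ← hu', Friedland.Finsupp.degree_add', Friedland.Finsupp.degree_single']
    have hmon : (monomial u 1 : MvPolynomial (Fin m) ℂ) = monomial u' 1 * X j ^ N := by
      rw [X_pow_eq_monomial, monomial_mul, mul_one, hu']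
    rw [hmon, ← hBX j, Finset.mul_sum]
    apply Submodule.sum_mem
    intro i _
    rw [← mul_assoc]
    have hq : (monomial u' 1 * B j i).IsHomogeneous (u'.degree + (N - d i)) :=
      (isHomogeneous_monomial 1 rfl).mul (hB j i)
    have hlt : u'.degree + (N - d i) < e := by have := hd i; have := hNd i; omega
    have hmem := IH _ hlt _ hq
    clear_value u'
    generalize (monomial u' 1 * B j i : MvPolynomial (Fin m) ℂ) = q at hmem
    refine Submodule.span_induction ?_ ?_ ?_ ?_ hmem
    · rintro x ⟨α, v, hv, hsum', rfl⟩
      apply Submodule.subset_span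
      refine ⟨fun t => α t + (if t = i then 1 else 0), v, hv, ?_, ?_⟩
      · have h1 : ∑ t, (α t + if t = i then 1 else 0) * d t = (∑ t, α t * d t) + d i := by
          simp_rw [add_mul, ite_mul, one_mul, zero_mul]
          rw [Finset.sum_add_distrib, Finset.sum_ite_eq' Finset.univ i d,
            if_pos (Finset.mem_univ i)]
        rw [h1]
        have := hd i; have := hNd i
        omega
      · have h2 : (∏ t, g t ^ (α t + if t = i then 1 else 0)) = (∏ t, g t ^ α t) * g i := by
          simp_rw [pow_add, pow_ite, pow_one, pow_zero]
          rw [Finset.prod_mul_distrib, Finset.prod_ite_eq' Finset.univ i g,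
            if_pos (Finset.mem_univ i)]
        rw [h2]
        ring
    · rw [zero_mul]; exact Submodule.zero_mem _
    · intro x y _ _ hx hy
      rw [add_mul]; exact Submodule.add_mem _ hx hy
    · intro c x _ hx
      rw [smul_mul_assoc]; exact Submodule.smul_mem _ _ hx

/-- Core dimension-count: fewer than `m` homogeneous polynomials in `m` variables cannot
generate an ideal containing a power of every variable. -/
lemma Friedland.core {m r : ℕ} (hrm : r < m) (d : Fin r → ℕ) (hd : ∀ i, 0 < d i)
    (g : Fin r → MvPolynomial (Fin m) ℂ) (hg : ∀ i, (g i).IsHomogeneous (d i))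
    (N : ℕ) (hN : 0 < N) (hNd : ∀ i, d i ≤ N)
    (hXN : ∀ j, (X j : MvPolynomial (Fin m) ℂ) ^ N ∈ Ideal.span (Set.range g)) :
    False := by
  classical
  have hm : 0 < m := by omega
  choose B hB1 hB2 using fun j => Friedland.homog_rep d g hg N hNd j (hXN j)
  set D := m * N with hD
  set K := D ^ m * m ^ r with hK
  set k := m * K with hk
  -- upper spanning family
  set Φ : (Fin r → Fin (k+1)) × (Fin m → Fin D) → MvPolynomial (Fin m) ℂ :=
    fun av => (∏ i, g i ^ (av.1 i : ℕ)) *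
      monomial (Finsupp.equivFunOnFinite.symm fun j => ((av.2 j : ℕ))) 1 with hΦ
  have hSS : ∀ e ≤ k, Friedland.SS g d N e ⊆ Set.range Φ := by
    rintro e he q ⟨α, v, hv, hsum, rfl⟩
    have hα : ∀ i, α i ≤ k := by
      intro i
      have h1 : α i * d i ≤ ∑ t, α t * d t :=
        Finset.single_le_sum (f := fun t => α t * d t) (fun t _ => Nat.zero_le _)
          (Finset.mem_univ i)
      have h2 : α i ≤ α i * d i := Nat.le_mul_of_pos_right _ (hd i)
      omega
    have hvj : ∀ j, v j < D := fun j => lt_of_le_of_lt (Finsupp.le_degree j v) hv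
    refine ⟨(fun i => ⟨α i, by have := hα i; omega⟩, fun j => ⟨v j, hvj j⟩), ?_⟩
    have hv' : Finsupp.equivFunOnFinite.symm
        (fun j => (((⟨v j, hvj j⟩ : Fin D)) : ℕ)) = v := by
      rw [show (fun j => (((⟨v j, hvj j⟩ : Fin D)) : ℕ)) = ⇑v from rfl]
      exact Finsupp.equivFunOnFinite_symm_coe v
    simp only [hΦ]
    rw [hv']
  -- lower (independent) family
  set ι : (Fin m → Fin (K+1)) → (Fin m →₀ ℕ) :=
    fun w => Finsupp.equivFunOnFinite.symm (fun j => (w j : ℕ)) with hι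
  have hιinj : Function.Injective ι := by
    intro w w' h
    have := Finsupp.equivFunOnFinite.symm.injective h
    funext j
    exact Fin.val_injective (congrFun this j)
  set Ψ : (Fin m → Fin (K+1)) → MvPolynomial (Fin m) ℂ := fun w => monomial (ι w) 1 with hΨ
  have hΨli : LinearIndependent ℂ Ψ := by
    have h := (basisMonomials (Fin m) ℂ).linearIndependent.comp ι hιinj
    have : Ψ = (⇑(basisMonomials (Fin m) ℂ)) ∘ ι := by
      funext w
      simp [hΨ, coe_basisMonomials]
    rwa [this]
  have hΨmem : ∀ w, Ψ w ∈ Submodule.span ℂ (Set.range Φ) := by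
    intro w
    have hdeg : (ι w).degree ≤ k := by
      rw [Friedland.Finsupp.degree_eq_sum_univ]
      have : ∀ j, (ι w) j ≤ K := by
        intro j
        simp only [hι, Finsupp.coe_equivFunOnFinite_symm]
        omega
      calc ∑ j, (ι w) j ≤ ∑ _j : Fin m, K := Finset.sum_le_sum fun j _ => this j
        _ = m * K := by rw [Finset.sum_const, Finset.card_univ, Fintype.card_fin, smul_eq_mul]
    have hhom : (Ψ w).IsHomogeneous (ι w).degree := isHomogeneous_monomial 1 rfl
    have := Friedland.graded_span hm d hd g N hN hNd B hB1 hB2 _ _ hhom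
    exact Submodule.span_mono (hSS _ hdeg) this
  haveI : Module.Finite ℂ (Submodule.span ℂ (Set.range Φ)) :=
    FiniteDimensional.span_of_finite ℂ (Set.finite_range Φ)
  have hlow : (K+1)^m ≤ Module.finrank ℂ (Submodule.span ℂ (Set.range Φ)) := by
    have h1 : Module.finrank ℂ (Submodule.span ℂ (Set.range Ψ)) = (K+1)^m := by
      rw [finrank_span_eq_card hΨli]
      simp [Fintype.card_fun]
    rw [← h1]
    exact Submodule.finrank_mono (Submodule.span_le.mpr (Set.range_subset_iff.mpr hΨmem))
  have hup : Module.finrank ℂ (Submodule.span ℂ (Set.range Φ)) ≤ (k+1)^r * D^m := by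
    have hcard : Fintype.card ((Fin r → Fin (k+1)) × (Fin m → Fin D)) = (k+1)^r * D^m := by
      rw [Fintype.card_prod, Fintype.card_fun, Fintype.card_fun, Fintype.card_fin,
        Fintype.card_fin, Fintype.card_fin, Fintype.card_fin]
    have h := finrank_range_le_card (R := ℂ) Φ
    rw [hcard] at h
    exact h
  have hineq : (K+1)^m ≤ (k+1)^r * D^m := le_trans hlow hup
  -- arithmetic contradiction
  have hD1 : 1 ≤ D := Nat.mul_pos hm hN
  have hkm : m * (K+1) = k + m := by rw [hk]; ring
  have h2 : (k+1)^r ≤ m^r * (K+1)^r := by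
    calc (k+1)^r ≤ (m*(K+1))^r := Nat.pow_le_pow_left (by omega) r
      _ = m^r * (K+1)^r := Nat.mul_pow m (K+1) r
  have h3 : (K+1)^m ≤ (K+1)^r * (m^r * D^m) := by
    calc (K+1)^m ≤ m^r * (K+1)^r * D^m := le_trans hineq (Nat.mul_le_mul_right _ h2)
      _ = (K+1)^r * (m^r * D^m) := by ring
  have h4 : (K+1)^r * (K+1) ≤ (K+1)^r * (m^r * D^m) := by
    calc (K+1)^r * (K+1) = (K+1)^(r+1) := by rw [pow_succ]
      _ ≤ (K+1)^m := Nat.pow_le_pow_right (by omega) (by omega)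
      _ ≤ _ := h3
  have h5 : K + 1 ≤ m^r * D^m := Nat.le_of_mul_le_mul_left
    (by rw [mul_comm ((K+1)^r)] at h4 ⊢; exact h4) (by positivity)
  have : m^r * D^m = K := by rw [hK]; ring
  omega

end FriedlandAux

/-- Friedland's theorem: a polynomial map f = (f₁,...,f_n) : ℂⁿ → ℂⁿ whose components
are homogeneous (of positive degrees) and whose only common zero is the origin is
surjective. -/
theorem homogeneous_only_trivial_zero_surjective (n : ℕ) (d : Fin n → ℕ)
    (hd : ∀ i, 0 < d i) (f : Fin n → MvPolynomial (Fin n) ℂ)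
    (hf : ∀ i, (f i).IsHomogeneous (d i))
    (h0 : ∀ x : Fin n → ℂ, (∀ i, MvPolynomial.eval x (f i) = 0) → x = 0) :
    ∀ ω : Fin n → ℂ, ∃ x : Fin n → ℂ, ∀ i, MvPolynomial.eval x (f i) = ω i := by
  intro ω
  classical
  -- homogenize: F i = f i (x₀,...,x_{n-1}) - ω i * x_n ^ (d i), in n+1 variables
  set F : Fin n → MvPolynomial (Fin (n+1)) ℂ :=
    fun i => rename Fin.castSucc (f i) - C (ω i) * X (Fin.last n) ^ (d i) with hF
  have hFhom : ∀ i, (F i).IsHomogeneous (d i) := fun i =>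
    ((hf i).rename_isHomogeneous).sub (isHomogeneous_C_mul_X_pow (ω i) (Fin.last n) (d i))
  -- the homogenized system has a nontrivial common zero
  have claim : ∃ z : Fin (n+1) → ℂ, z ≠ 0 ∧ ∀ i, eval z (F i) = 0 := by
    by_contra hc
    push_neg at hc
    set J := Ideal.span (Set.range F) with hJ
    have hXrad : ∀ j : Fin (n+1), (X j : MvPolynomial (Fin (n+1)) ℂ) ∈ J.radical := by
      intro j
      rw [hJ, ← MvPolynomial.vanishingIdeal_zeroLocus_eq_radical (K := ℂ),
        MvPolynomial.mem_vanishingIdeal_iff]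
      intro x hx
      have hzero : ∀ i, eval x (F i) = 0 := fun i =>
        (MvPolynomial.mem_zeroLocus_iff.mp hx) _ (Ideal.subset_span ⟨i, rfl⟩)
      have hx0 : x = 0 := by
        by_contra hxne
        obtain ⟨i, hi⟩ := hc x hxne
        exact hi (hzero i)
      rw [hx0]
      simp
    choose Nj hNj using fun j => (Ideal.mem_radical_iff.mp (hXrad j))
    set N := (Finset.univ.sup Nj) + (Finset.univ.sup d) + 1 with hN
    have hNpos : 0 < N := by omega
    have hNd : ∀ i, d i ≤ N := fun i => by
      have := Finset.le_sup (f := d) (Finset.mem_univ i); omega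
    have hXN : ∀ j, (X j : MvPolynomial (Fin (n+1)) ℂ) ^ N ∈ J := by
      intro j
      have hle : Nj j ≤ N := by
        have := Finset.le_sup (f := Nj) (Finset.mem_univ j); omega
      have hpow : (X j : MvPolynomial (Fin (n+1)) ℂ) ^ N
          = X j ^ (N - Nj j) * X j ^ (Nj j) := by
        rw [← pow_add]; congr 1; omega
      rw [hpow]
      exact Ideal.mul_mem_left _ _ (hNj j)
    exact Friedland.core (Nat.lt_succ_self n) d hd F hFhom N hNpos hNd hXN
  obtain ⟨z, hz0, hzF⟩ := claim
  set t := z (Fin.last n) with hT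
  set y : Fin n → ℂ := fun j => z (Fin.castSucc j) with hy
  have hkey : ∀ i, eval y (f i) = ω i * t ^ d i := by
    intro i
    have h := hzF i
    rw [hF] at h
    simp only [map_sub, map_mul, map_pow, eval_C, eval_X, eval_rename] at h
    rw [sub_eq_zero] at h
    exact h
  by_cases ht : t = 0
  · exfalso
    have hy0 : y = 0 := h0 y (fun i => by
      rw [hkey i, ht, zero_pow (hd i).ne', mul_zero])
    apply hz0
    funext j
    refine Fin.lastCases ?_ ?_ j
    · exact ht
    · intro j'
      exact congrFun hy0 j'
  · refine ⟨t⁻¹ • y, fun i => ?_⟩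
    rw [Friedland.eval_smul_homog (hf i) t⁻¹ y, hkey i, inv_pow]
    field_simp
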